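/- Let G be a finite simple graph, let k, ℓ be natural numbers, let X, Y be disjoint vertex sets of G with |N(X′) ∩ Y| ≥ |X′| + ℓ for every non-empty subset X′ ⊆ X, and let S be a vertex set of G with |S| ≤ k such that G − S has at most ℓ edges. Then |S \ (X ∪ Y)| ≤ k − |X|. -/

import Mathlib

/-- The graph obtained from `G` by deleting the vertices in `S`. -/
def SimpleGraph.delVerts {V : Type*} (G : SimpleGraph V) (S : Set V) : SimpleGraph V where
  Adj a b := G.Adj a b ∧ a ∉ S ∧ b ∉ S
  symm := ⟨fun _ _ h => ⟨h.1.symm, h.2.2, h.2.1⟩⟩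
  loopless := ⟨fun a h => G.ne_of_adj h.1 rfl⟩

/-- If `X, Y` are disjoint vertex sets with `|N(X') ∩ Y| ≥ |X'| + ℓ` for every non-empty
`X' ⊆ X`, and `S` is a set of at most `k` vertices whose deletion leaves at most `ℓ` edges,
then `|S \ (X ∪ Y)| ≤ k - |X|`. -/
theorem solution_minus_expansion_small {V : Type*} [Fintype V] [DecidableEq V]
    (G : SimpleGraph V) [DecidableRel G.Adj] (k ℓ : ℕ) (X Y : Finset V) (hXY : Disjoint X Y)
    (hexp : ∀ X' ⊆ X, X'.Nonempty →
      X'.card + ℓ ≤ (Y.filter (fun y => ∃ x ∈ X', G.Adj x y)).card)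
    (S : Finset V) (hSk : S.card ≤ k) (hSℓ : (G.delVerts ↑S).edgeSet.ncard ≤ ℓ) :
    ((S \ (X ∪ Y)).card : ℤ) ≤ (k : ℤ) - X.card := by
  classical
  have key : X.card ≤ (S ∩ (X ∪ Y)).card := by
    set X' : Finset V := X \ S with hX'
    by_cases hne : X'.Nonempty
    · -- main case
      set T : Finset V := Y.filter (fun y => ∃ x ∈ X', G.Adj x y) with hT
      have hTcard : X'.card + ℓ ≤ T.card := hexp X' (Finset.sdiff_subset) hne
      set T' : Finset V := T \ S with hT'
      -- choice function
      have hch : ∀ y ∈ T', ∃ x ∈ X', G.Adj x y := by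
        intro y hy
        have := Finset.mem_sdiff.mp hy
        exact (Finset.mem_filter.mp this.1).2
      let f : V → Sym2 V := fun y =>
        if h : ∃ x ∈ X', G.Adj x y then s(h.choose, y) else s(y, y)
      have hfprop : ∀ y ∈ T', ∃ x ∈ X', G.Adj x y ∧ f y = s(x, y) := by
        intro y hy
        obtain ⟨x, hx, hadj⟩ := hch y hy
        have h : ∃ x ∈ X', G.Adj x y := ⟨x, hx, hadj⟩
        obtain ⟨hx', hadj'⟩ := h.choose_spec
        exact ⟨h.choose, hx', hadj', by simp [f, h]⟩
      have hinj : Set.InjOn f ↑T' := by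
        intro y1 hy1 y2 hy2 heq
        obtain ⟨x1, hx1, _, he1⟩ := hfprop y1 hy1
        obtain ⟨x2, hx2, _, he2⟩ := hfprop y2 hy2
        rw [he1, he2, Sym2.eq_iff] at heq
        rcases heq with ⟨_, h⟩ | ⟨h1, h2⟩
        · exact h
        · exfalso
          have hy1Y : y1 ∈ Y := by
            have := Finset.mem_sdiff.mp hy1
            exact (Finset.mem_filter.mp this.1).1
          have hx2X : x2 ∈ X := Finset.mem_sdiff.mp hx2 |>.1
          exact (Finset.disjoint_left.mp hXY hx2X) (h2 ▸ hy1Y)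
      have hsub : ↑(T'.image f) ⊆ (G.delVerts ↑S).edgeSet := by
        intro e he
        simp only [Finset.coe_image, Set.mem_image, Finset.mem_coe] at he
        obtain ⟨y, hy, rfl⟩ := he
        obtain ⟨x, hx, hadj, he⟩ := hfprop y hy
        rw [he, SimpleGraph.mem_edgeSet]
        refine ⟨hadj, ?_, ?_⟩
        · exact fun hxS => (Finset.mem_sdiff.mp hx).2 hxS
        · exact fun hyS => (Finset.mem_sdiff.mp hy).2 hyS
      have hT'card : T'.card ≤ ℓ := by
        have h1 : T'.card = (T'.image f).card :=
          (Finset.card_image_of_injOn hinj).symm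
        have h2 : (T'.image f).card = (↑(T'.image f) : Set (Sym2 V)).ncard := by
          rw [Set.ncard_coe_finset]
        have h3 : (↑(T'.image f) : Set (Sym2 V)).ncard ≤ (G.delVerts ↑S).edgeSet.ncard :=
          Set.ncard_le_ncard hsub (Set.toFinite _)
        omega
      -- T ⊆ T' ∪ (Y ∩ S)
      have hTsub : T ⊆ T' ∪ (Y ∩ S) := by
        intro y hy
        by_cases hyS : y ∈ S
        · exact Finset.mem_union_right _ (Finset.mem_inter.mpr
            ⟨(Finset.mem_filter.mp hy).1, hyS⟩)
        · exact Finset.mem_union_left _ (Finset.mem_sdiff.mpr ⟨hy, hyS⟩)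
      have hTle : T.card ≤ T'.card + (Y ∩ S).card :=
        le_trans (Finset.card_le_card hTsub) (Finset.card_union_le _ _)
      have hX'le : X'.card ≤ (Y ∩ S).card := by omega
      have hXsplit : X.card ≤ (X ∩ S).card + X'.card := by
        have : X ⊆ (X ∩ S) ∪ X' := by
          intro x hx
          by_cases hxS : x ∈ S
          · exact Finset.mem_union_left _ (Finset.mem_inter.mpr ⟨hx, hxS⟩)
          · exact Finset.mem_union_right _ (Finset.mem_sdiff.mpr ⟨hx, hxS⟩)
        exact le_trans (Finset.card_le_card this) (Finset.card_union_le _ _)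
      have hdisj : Disjoint (X ∩ S) (Y ∩ S) :=
        hXY.mono (Finset.inter_subset_left) (Finset.inter_subset_left)
      have hunion : (X ∩ S) ∪ (Y ∩ S) ⊆ S ∩ (X ∪ Y) := by
        intro v hv
        rcases Finset.mem_union.mp hv with h | h
        · exact Finset.mem_inter.mpr ⟨(Finset.mem_inter.mp h).2,
            Finset.mem_union_left _ (Finset.mem_inter.mp h).1⟩
        · exact Finset.mem_inter.mpr ⟨(Finset.mem_inter.mp h).2,
            Finset.mem_union_right _ (Finset.mem_inter.mp h).1⟩
      have := Finset.card_union_of_disjoint hdisj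
      have := Finset.card_le_card hunion
      omega
    · -- X ⊆ S
      have hXS : X ⊆ S ∩ (X ∪ Y) := by
        intro x hx
        have hxS : x ∈ S := by
          by_contra h
          exact hne ⟨x, Finset.mem_sdiff.mpr ⟨hx, h⟩⟩
        exact Finset.mem_inter.mpr ⟨hxS, Finset.mem_union_left _ hx⟩
      exact Finset.card_le_card hXS
  have hsplit : (S \ (X ∪ Y)).card + (S ∩ (X ∪ Y)).card = S.card :=
    Finset.card_sdiff_add_card_inter S (X ∪ Y)
  have : (S \ (X ∪ Y)).card + X.card ≤ k := by omega
  push_cast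
  omega
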